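/- Suppose there exist C > 0 and ρ > 0 such that for every n ≥ 1 the closed absolutely convex hull acx(Φ(Ω)) admits an (n, C·n^{−ρ−1/2})-cover. Let β ∈ [0,∞), γ ∈ (0,1], f ∈ H, and let (x_i)_{i≥1} be a weak β-greedy sequence for f with parameter γ. Then for every m ≥ 2: min_{1 ≤ i ≤ m} ‖r_i‖_∞ ≤ (C·√5·4^{ρ+β/2})^{1/max(1,β)} · γ^{−1} · (m^{−ρ − β/2})^{1/max(1,β)} · ‖f‖_H. -/

import Mathlib

open scoped RealInnerProductSpace
open MeasureTheory Metric
open scoped ENNReal NNReal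
open InnerProductSpace
set_option maxHeartbeats 1600000

variable {H : Type*} [NormedAddCommGroup H] [InnerProductSpace ℝ H] {Ω : Type*}

/-- The kernel interpolant `I_X f`: the orthogonal projection of `f` onto
`V(X) = span {Φ(x) : x ∈ X}`. -/
noncomputable def interp (Φ : Ω → H) (X : Finset Ω) (f : H) : H :=
  haveI : FiniteDimensional ℝ (Submodule.span ℝ (Φ '' (X : Set Ω))) :=
    FiniteDimensional.span_of_finite ℝ (X.finite_toSet.image Φ)
  (Submodule.orthogonalProjectionOnto (Submodule.span ℝ (Φ '' (X : Set Ω))) f : H)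

/-- The power function `P_X(z) = ‖Φ(z) − Π_{V(X)} Φ(z)‖`. -/
noncomputable def powerFun (Φ : Ω → H) (X : Finset Ω) (z : Ω) : ℝ :=
  ‖Φ z - interp Φ X (Φ z)‖

/-- The sup norm `‖g‖_∞ = sup_{x ∈ Ω} |g(x)|`, where `g(x) = ⟪g, Φ(x)⟫`. -/
noncomputable def supNorm (Φ : Ω → H) (g : H) : ℝ := ⨆ x : Ω, |⟪g, Φ x⟫|

/-- `X_i = {x_1, …, x_i}` (so `X_0 = ∅`). -/
noncomputable def Xset (x : ℕ → Ω) (i : ℕ) : Finset Ω := by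
  classical exact (Finset.Icc 1 i).image x

/-- `(x_i)_{i ≥ 1}` is a weak β-greedy sequence for `f` with parameter `γ`:
for every `i ≥ 0` and `z ∈ Ω`,
`γ · |r_i(z)|^β · P_{X_i}(z)^{1−β} ≤ |r_i(x_{i+1})|^β · P_{X_i}(x_{i+1})^{1−β}`,
where `r_i = f − I_{X_i} f`. -/
def IsWeakGreedy (Φ : Ω → H) (f : H) (β γ : ℝ) (x : ℕ → Ω) : Prop :=
  ∀ (i : ℕ) (z : Ω),
    γ * |⟪f - interp Φ (Xset x i) f, Φ z⟫| ^ β * powerFun Φ (Xset x i) z ^ (1 - β)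
      ≤ |⟪f - interp Φ (Xset x i) f, Φ (x (i + 1))⟫| ^ β
          * powerFun Φ (Xset x i) (x (i + 1)) ^ (1 - β)

/-- The closed absolutely convex (symmetric convex) hull of `K`. -/
def acx (K : Set H) : Set H :=
  closure {y : H | ∃ (m : ℕ) (c : Fin m → ℝ) (g : Fin m → H),
    (∀ j, g j ∈ K) ∧ (∑ j, |c j|) ≤ 1 ∧ y = ∑ j, c j • g j}

/-- `S` admits an `(n, ε)`-cover: it can be covered by at most `2^n` closed balls of
radius `ε`. -/
def HasCover (S : Set H) (n : ℕ) (ε : ℝ) : Prop :=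
  ∃ (q : ℕ) (y : Fin q → H), q ≤ 2 ^ n ∧ S ⊆ ⋃ j, Metric.closedBall (y j) ε

theorem S8.fd (Φ : Ω → H) (X : Finset Ω) :
    FiniteDimensional ℝ (Submodule.span ℝ (Φ '' (X : Set Ω))) :=
  FiniteDimensional.span_of_finite ℝ (X.finite_toSet.image Φ)

theorem S8.interp_mem (Φ : Ω → H) (X : Finset Ω) (f : H) :
    interp Φ X f ∈ Submodule.span ℝ (Φ '' (X : Set Ω)) := by
  haveI := S8.fd Φ X
  exact (Submodule.orthogonalProjectionOnto _ f).2

theorem S8.inner_sub_interp (Φ : Ω → H) (X : Finset Ω) (f : H) {v : H}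
    (hv : v ∈ Submodule.span ℝ (Φ '' (X : Set Ω))) :
    ⟪f - interp Φ X f, v⟫ = 0 := by
  haveI := S8.fd Φ X
  have h := Submodule.sub_starProjection_mem_orthogonal
    (K := Submodule.span ℝ (Φ '' (X : Set Ω))) f
  exact (Submodule.mem_orthogonal' _ _).1 h v hv

theorem S8.norm_sub_interp_le (Φ : Ω → H) (X : Finset Ω) (f w : H)
    (hw : w ∈ Submodule.span ℝ (Φ '' (X : Set Ω))) :
    ‖f - interp Φ X f‖ ≤ ‖f - w‖ := by
  have h1 : ⟪f - interp Φ X f, interp Φ X f - w⟫ = 0 :=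
    S8.inner_sub_interp Φ X f (Submodule.sub_mem _ (S8.interp_mem Φ X f) hw)
  have h2 : f - w = (f - interp Φ X f) + (interp Φ X f - w) := by abel
  have h3 : ‖f - w‖^2 = ‖f - interp Φ X f‖^2 + ‖interp Φ X f - w‖^2 := by
    rw [h2, norm_add_sq_real, h1]; ring
  nlinarith [norm_nonneg (f - w), norm_nonneg (f - interp Φ X f),
    sq_nonneg ‖interp Φ X f - w‖]

theorem S8.norm_sub_interp_le_self (Φ : Ω → H) (X : Finset Ω) (f : H) :
    ‖f - interp Φ X f‖ ≤ ‖f‖ := by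
  simpa using S8.norm_sub_interp_le Φ X f 0 (Submodule.zero_mem _)

theorem S8.abs_inner_le (Φ : Ω → H) (X : Finset Ω) (f : H) (z : Ω) :
    |⟪f - interp Φ X f, Φ z⟫| ≤ ‖f - interp Φ X f‖ * powerFun Φ X z := by
  have h0 : ⟪f - interp Φ X f, interp Φ X (Φ z)⟫ = 0 :=
    S8.inner_sub_interp Φ X f (S8.interp_mem Φ X (Φ z))
  have : ⟪f - interp Φ X f, Φ z⟫ = ⟪f - interp Φ X f, Φ z - interp Φ X (Φ z)⟫ := by
    rw [inner_sub_right, h0]; ring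
  rw [this]
  exact (abs_real_inner_le_norm _ _)

theorem S8.powerFun_le_one (Φ : Ω → H) (hΦ : ∀ z : Ω, ‖Φ z‖ ≤ 1) (X : Finset Ω) (z : Ω) :
    powerFun Φ X z ≤ 1 := by
  have := S8.norm_sub_interp_le Φ X (Φ z) 0 (Submodule.zero_mem _)
  simpa [powerFun] using this.trans (by simpa using hΦ z)

theorem S8.powerFun_nonneg (Φ : Ω → H) (X : Finset Ω) (z : Ω) : 0 ≤ powerFun Φ X z :=
  norm_nonneg _

theorem S8.gs_inner_eq_zero (g : ℕ → H) (i : ℕ) {s : Set ℕ} (hs : ∀ k ∈ s, k ≠ i)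
    {w : H} (hw : w ∈ Submodule.span ℝ (gramSchmidt ℝ g '' s)) :
    ⟪gramSchmidt ℝ g i, w⟫ = 0 := by
  induction hw using Submodule.span_induction with
  | mem w hw => obtain ⟨k, hk, rfl⟩ := hw; exact gramSchmidt_orthogonal ℝ g (hs k hk).symm
  | zero => simp
  | add a b _ _ ha hb => rw [inner_add_right, ha, hb]; ring
  | smul r a _ ha => rw [real_inner_smul_right, ha]; ring

theorem S8.gj_sub_gs_mem (g : ℕ → H) (j : ℕ) :
    g j - gramSchmidt ℝ g j ∈ Submodule.span ℝ (gramSchmidt ℝ g '' Set.Iio j) := by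
  have h : g j - gramSchmidt ℝ g j
      = ∑ i ∈ Finset.Iio j, ((Submodule.orthogonalProjectionOnto (ℝ ∙ gramSchmidt ℝ g i) (g j)) : H) := by
    rw [gramSchmidt_def ℝ g j, sub_sub_cancel]; rfl
  rw [h]
  refine Submodule.sum_mem _ fun k hk => ?_
  have hm : ((Submodule.orthogonalProjectionOnto (ℝ ∙ gramSchmidt ℝ g k) (g j)) : H)
      ∈ (ℝ ∙ gramSchmidt ℝ g k) := (Submodule.orthogonalProjectionOnto (ℝ ∙ gramSchmidt ℝ g k) (g j)).2
  have hsub : (ℝ ∙ gramSchmidt ℝ g k) ≤ Submodule.span ℝ (gramSchmidt ℝ g '' Set.Iio j) :=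
    Submodule.span_mono (Set.singleton_subset_iff.2 (Set.mem_image_of_mem _ (Finset.mem_Iio.1 hk)))
  exact hsub hm

theorem S8.gj_sub_gs_mem' (g : ℕ → H) (j : ℕ) :
    g j - gramSchmidt ℝ g j ∈ Submodule.span ℝ (g '' Set.Iio j) := by
  rw [← span_gramSchmidt_Iio ℝ g j]; exact S8.gj_sub_gs_mem g j

theorem S8.inner_gs_self (g : ℕ → H) (j : ℕ) :
    ⟪gramSchmidt ℝ g j, g j⟫ = ‖gramSchmidt ℝ g j‖^2 := by
  have h1 : ⟪gramSchmidt ℝ g j, g j - gramSchmidt ℝ g j⟫ = 0 :=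
    S8.gs_inner_eq_zero g j (fun k hk => (Set.mem_Iio.1 hk).ne) (S8.gj_sub_gs_mem g j)
  rw [inner_sub_right] at h1
  have h2 := real_inner_self_eq_norm_sq (gramSchmidt ℝ g j)
  linarith

theorem S8.gs_inner_g_eq_zero (g : ℕ → H) {i j : ℕ} (hij : j < i) :
    ⟪gramSchmidt ℝ g i, g j⟫ = 0 := by
  have hmem : g j ∈ Submodule.span ℝ (gramSchmidt ℝ g '' Set.Iic j) := by
    rw [span_gramSchmidt_Iic ℝ g j]
    exact Submodule.subset_span (Set.mem_image_of_mem _ Set.self_mem_Iic)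
  exact S8.gs_inner_eq_zero g i (fun k hk => ((Set.mem_Iic.1 hk).trans_lt hij).ne) hmem

theorem S8.real_le_one {β γ u p R Fn Q : ℝ} (hβ0 : 0 ≤ β) (hβ1 : β ≤ 1)
    (hγ0 : 0 < γ) (hu0 : 0 ≤ u) (hp0 : 0 ≤ p) (hR0 : 0 ≤ R) (hRF : R ≤ Fn)
    (hup : u ≤ R * p) (hg : γ * u ^ β * p ^ (1 - β) ≤ Q) :
    u ≤ γ⁻¹ * Q * Fn ^ (1 - β) := by
  have hQ0 : 0 ≤ Q := le_trans (by positivity) hg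
  have hFn0 : 0 ≤ Fn := hR0.trans hRF
  rcases hu0.lt_or_eq with hupos | h0
  swap
  · rw [← h0]
    exact mul_nonneg (mul_nonneg (inv_nonneg.2 hγ0.le) hQ0) (Real.rpow_nonneg hFn0 _)
  have h1 : u = u ^ β * u ^ (1 - β) := by
    rw [← Real.rpow_add hupos]; norm_num
  have h2 : u ^ (1 - β) ≤ Fn ^ (1 - β) * p ^ (1 - β) := by
    rw [← Real.mul_rpow hFn0 hp0]
    exact Real.rpow_le_rpow hu0 (hup.trans (mul_le_mul_of_nonneg_right hRF hp0)) (by linarith)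
  have h3 : u ≤ (u ^ β * p ^ (1 - β)) * Fn ^ (1 - β) := by
    calc u = u ^ β * u ^ (1 - β) := h1
    _ ≤ u ^ β * (Fn ^ (1 - β) * p ^ (1 - β)) :=
        mul_le_mul_of_nonneg_left h2 (Real.rpow_nonneg hu0 _)
    _ = (u ^ β * p ^ (1 - β)) * Fn ^ (1 - β) := by ring
  have hg' : γ * (u ^ β * p ^ (1 - β)) ≤ Q := by rw [← mul_assoc]; exact hg
  have h4 : u ^ β * p ^ (1 - β) ≤ γ⁻¹ * Q := (le_inv_mul_iff₀ hγ0).2 hg'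
  calc u ≤ (u ^ β * p ^ (1 - β)) * Fn ^ (1 - β) := h3
  _ ≤ (γ⁻¹ * Q) * Fn ^ (1 - β) := mul_le_mul_of_nonneg_right h4 (Real.rpow_nonneg hFn0 _)
  _ = γ⁻¹ * Q * Fn ^ (1 - β) := by ring

theorem S8.real_gt_one {β γ u p R Q : ℝ} (hβ1 : 1 < β)
    (hγ0 : 0 < γ) (hγ1 : γ ≤ 1) (hu0 : 0 ≤ u) (hp0 : 0 ≤ p) (hp1 : p ≤ 1) (hR0 : 0 ≤ R)
    (hup : u ≤ R * p) (hg : γ * u ^ β * p ^ (1 - β) ≤ Q) :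
    u ≤ γ⁻¹ * Q ^ (1 / β) := by
  have hβ0 : (0:ℝ) < β := by linarith
  have hQ0 : 0 ≤ Q := le_trans (by positivity) hg
  rcases hu0.lt_or_eq with hupos | h0
  swap
  · rw [← h0]
    exact mul_nonneg (inv_nonneg.2 hγ0.le) (Real.rpow_nonneg hQ0 _)
  have hppos : 0 < p := by
    rcases hp0.lt_or_eq with h | h
    · exact h
    · exfalso; rw [← h, mul_zero] at hup; linarith
  have hg' : γ * (u ^ β * p ^ (1 - β)) ≤ Q := by rw [← mul_assoc]; exact hg
  have h4 : u ^ β * p ^ (1 - β) ≤ γ⁻¹ * Q := (le_inv_mul_iff₀ hγ0).2 hg'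
  have h5 : u ^ β ≤ γ⁻¹ * Q := by
    have e1 : u ^ β = (u ^ β * p ^ (1 - β)) * p ^ (β - 1) := by
      rw [mul_assoc, ← Real.rpow_add hppos]
      norm_num
    have e2 : p ^ (β - 1) ≤ 1 := Real.rpow_le_one hp0 hp1 (by linarith)
    calc u ^ β = (u ^ β * p ^ (1 - β)) * p ^ (β - 1) := e1
    _ ≤ (u ^ β * p ^ (1 - β)) * 1 := by
        refine mul_le_mul_of_nonneg_left e2 ?_
        positivity
    _ = u ^ β * p ^ (1 - β) := by ring
    _ ≤ γ⁻¹ * Q := h4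
  have h6 : u ≤ (γ⁻¹ * Q) ^ (1 / β) := by
    have : u = (u ^ β) ^ (1 / β) := by
      rw [← Real.rpow_mul hu0, mul_one_div, div_self hβ0.ne', Real.rpow_one]
    rw [this]
    exact Real.rpow_le_rpow (Real.rpow_nonneg hu0 _) h5 (by positivity)
  have h7 : (γ⁻¹ * Q) ^ (1 / β) = γ⁻¹ ^ (1/β) * Q ^ (1/β) :=
    Real.mul_rpow (inv_nonneg.2 hγ0.le) hQ0
  have h8 : γ⁻¹ ^ (1/β) ≤ γ⁻¹ := by
    have h1γ : 1 ≤ γ⁻¹ := (one_le_inv₀ hγ0).2 hγ1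
    calc γ⁻¹ ^ (1/β) ≤ γ⁻¹ ^ (1:ℝ) :=
      Real.rpow_le_rpow_of_exponent_le h1γ (by rw [div_le_one hβ0]; linarith)
    _ = γ⁻¹ := Real.rpow_one _
  calc u ≤ (γ⁻¹ * Q) ^ (1/β) := h6
  _ = γ⁻¹ ^ (1/β) * Q ^ (1/β) := h7
  _ ≤ γ⁻¹ * Q ^ (1/β) := mul_le_mul_of_nonneg_right h8 (Real.rpow_nonneg hQ0 _)

theorem S8.vol_lemma {N n q : ℕ} (hN : 1 ≤ N) (hq : q ≤ 2^n) {ε : ℝ} (hε : 0 ≤ ε)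
    (K : Set H) (g : ℕ → H)
    (hmem : ∀ c : Fin N → ℝ, (∑ j, |c j|) ≤ 1 → (∑ j : Fin N, c j • g (j:ℕ)) ∈ K)
    (y : Fin q → H) (hcov : K ⊆ ⋃ j, Metric.closedBall (y j) ε) :
    ∏ j : Fin N, ‖gramSchmidt ℝ g (j:ℕ)‖ ≤ 2^n * Real.sqrt N ^ N * ε ^ N := by
  classical
  by_cases hzero : ∃ j : Fin N, gramSchmidt ℝ g (j:ℕ) = 0
  · obtain ⟨j0, hj0⟩ := hzero
    have h0 : ∏ j : Fin N, ‖gramSchmidt ℝ g (j:ℕ)‖ = 0 :=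
      Finset.prod_eq_zero (Finset.mem_univ j0) (by simp [hj0])
    rw [h0]; positivity
  push_neg at hzero
  set d : Fin N → ℝ := fun j => ‖gramSchmidt ℝ g (j:ℕ)‖ with hd
  have hdpos : ∀ j, 0 < d j := fun j => norm_pos_iff.2 (hzero j)
  set E : Fin N → H := fun j => (d j)⁻¹ • gramSchmidt ℝ g (j:ℕ) with hE
  have hON : Orthonormal ℝ E := by
    rw [orthonormal_iff_ite]
    intro i j
    by_cases hij : i = j
    · subst hij
      simp only [hE, real_inner_smul_left, real_inner_smul_right, if_pos rfl]
      rw [real_inner_self_eq_norm_sq]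
      have := (hdpos i).ne'
      field_simp
      simp only [hd]
      simp
    · simp only [hE, real_inner_smul_left, real_inner_smul_right, if_neg hij]
      rw [gramSchmidt_orthogonal ℝ g (fun h => hij (Fin.val_injective h))]
      ring
  set F : H →ₗ[ℝ] EuclideanSpace ℝ (Fin N) :=
    { toFun := fun v => (WithLp.toLp 2 (fun j => ⟪E j, v⟫) : EuclideanSpace ℝ (Fin N))
      map_add' := fun u v => by ext j; simp [inner_add_right]
      map_smul' := fun r v => by ext j; simp [real_inner_smul_right] } with hF
  have hFapp : ∀ (v : H) (j : Fin N), F v j = ⟪E j, v⟫ := fun v j => rfl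
  have hFlip : ∀ v : H, ‖F v‖ ≤ ‖v‖ := by
    intro v
    have hb : ∑ j : Fin N, ‖⟪E j, v⟫‖^2 ≤ ‖v‖^2 := hON.sum_inner_products_le v
    rw [EuclideanSpace.norm_eq]
    have h2 : √(∑ j : Fin N, ‖F v j‖^2) ≤ √(‖v‖^2) := Real.sqrt_le_sqrt (by simpa [hFapp] using hb)
    simpa [Real.sqrt_sq (norm_nonneg v)] using h2
  set G : EuclideanSpace ℝ (Fin N) →ₗ[ℝ] H :=
    { toFun := fun c => ∑ j : Fin N, c j • g (j:ℕ)
      map_add' := by intro a b; simp [add_smul, Finset.sum_add_distrib]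
      map_smul' := by intro r a; simp [smul_smul, Finset.smul_sum] } with hG
  have hGapp : ∀ c : EuclideanSpace ℝ (Fin N), G c = ∑ j : Fin N, c j • g (j:ℕ) := fun c => rfl
  set L : EuclideanSpace ℝ (Fin N) →ₗ[ℝ] EuclideanSpace ℝ (Fin N) := F.comp G with hL
  set b := PiLp.basisFun 2 ℝ (Fin N) with hb
  have hGb : ∀ j : Fin N, G (b j) = g (j:ℕ) := by
    intro j
    rw [hGapp]
    rw [hb]
    have : ∀ k : Fin N, (PiLp.basisFun 2 ℝ (Fin N) j) k = if k = j then 1 else 0 := by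
      intro k
      rw [PiLp.basisFun_apply]
      simp [Pi.single_apply]
    simp only [this, ite_smul, one_smul, zero_smul]
    simp
  set M := LinearMap.toMatrix b b L with hM
  have hMapp : ∀ i j, M i j = ⟪E i, g (j:ℕ)⟫ := by
    intro i j
    rw [hM, LinearMap.toMatrix_apply]
    rw [hL, LinearMap.comp_apply, hGb j, hb, PiLp.basisFun_repr, hFapp]
  have htri : M.BlockTriangular id := by
    intro i j hij
    rw [hMapp, hE, real_inner_smul_left, S8.gs_inner_g_eq_zero g (by exact_mod_cast hij)]
    ring
  have hdiag : ∀ j, M j j = d j := by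
    intro j
    rw [hMapp, hE, real_inner_smul_left, S8.inner_gs_self g j]
    have := (hdpos j).ne'
    rw [hd]
    field_simp
  have hLdet : LinearMap.det L = ∏ j, d j := by
    rw [← LinearMap.det_toMatrix b L, ← hM, Matrix.det_of_upperTriangular htri]
    exact Finset.prod_congr rfl fun j _ => hdiag j
  set r : ℝ := (Real.sqrt N)⁻¹ with hr
  have hsN : 0 < Real.sqrt N := Real.sqrt_pos.2 (by exact_mod_cast Nat.pos_of_ne_zero (by omega))
  have hrpos : 0 < r := inv_pos.2 hsN
  set S : Set (EuclideanSpace ℝ (Fin N)) := L '' (Metric.closedBall 0 r) with hS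
  have hS1 : S ⊆ F '' K := by
    rintro _ ⟨c, hc, rfl⟩
    have hnorm : ‖c‖ ≤ r := by simpa [Metric.mem_closedBall, dist_zero_right] using hc
    have hsum : (∑ j, |c j|) ≤ 1 := by
      have h1 : (∑ j : Fin N, |c j|)^2 ≤ (N:ℝ) * ∑ j : Fin N, |c j|^2 := by
        simpa using sq_sum_le_card_mul_sum_sq (s := Finset.univ) (f := fun j : Fin N => |c j|)
      have h2 : ∑ j : Fin N, |c j|^2 ≤ r^2 := by
        have hne : ‖c‖^2 ≤ r^2 := by nlinarith [norm_nonneg c]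
        have heq : ‖c‖^2 = ∑ j : Fin N, |c j|^2 := by
          rw [EuclideanSpace.norm_eq, Real.sq_sqrt (by positivity)]
          simp [Real.norm_eq_abs]
        linarith [heq ▸ hne]
      have h3 : (N:ℝ) * r^2 = 1 := by
        rw [hr, inv_pow, Real.sq_sqrt (by positivity)]
        field_simp
      nlinarith [Finset.sum_nonneg (fun j (_ : j ∈ Finset.univ) => abs_nonneg (c j))]
    exact ⟨G c, hmem c hsum, rfl⟩
  have hS2 : F '' K ⊆ ⋃ j, Metric.closedBall (F (y j)) ε := by
    rintro _ ⟨v, hv, rfl⟩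
    obtain ⟨j, hj⟩ := Set.mem_iUnion.1 (hcov hv)
    refine Set.mem_iUnion.2 ⟨j, ?_⟩
    have hdist : dist (F v) (F (y j)) ≤ dist v (y j) := by
      rw [dist_eq_norm, dist_eq_norm, ← map_sub]
      exact hFlip _
    exact Metric.mem_closedBall.2 (hdist.trans (Metric.mem_closedBall.1 hj))
  set μ : Measure (EuclideanSpace ℝ (Fin N)) := volume with hμ
  set B := μ (Metric.ball (0 : EuclideanSpace ℝ (Fin N)) 1) with hB
  have hB0 : B ≠ 0 := (Metric.measure_ball_pos μ 0 one_pos).ne'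
  have hBt : B ≠ ⊤ := measure_ball_lt_top.ne
  have hfr : Module.finrank ℝ (EuclideanSpace ℝ (Fin N)) = N := finrank_euclideanSpace_fin
  have key1 : μ S = ENNReal.ofReal (∏ j, d j) * (ENNReal.ofReal (r ^ N) * B) := by
    rw [hS, μ.addHaar_image_linearMap, Measure.addHaar_closedBall μ 0 hrpos.le, hfr, hLdet,
      abs_of_nonneg (Finset.prod_nonneg fun j _ => (hdpos j).le)]
  have key2 : μ S ≤ (2^n : ℝ≥0∞) * (ENNReal.ofReal (ε ^ N) * B) := by
    calc μ S ≤ μ (⋃ j, Metric.closedBall (F (y j)) ε) := measure_mono (hS1.trans hS2)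
    _ ≤ ∑ j : Fin q, μ (Metric.closedBall (F (y j)) ε) := measure_iUnion_fintype_le μ _
    _ = ∑ _j : Fin q, ENNReal.ofReal (ε ^ N) * B := by
        refine Finset.sum_congr rfl fun j _ => ?_
        rw [Measure.addHaar_closedBall μ _ hε, hfr]
    _ = (q : ℝ≥0∞) * (ENNReal.ofReal (ε ^ N) * B) := by
        rw [Finset.sum_const, nsmul_eq_mul]
        simp
    _ ≤ (2^n : ℝ≥0∞) * (ENNReal.ofReal (ε ^ N) * B) := by
        refine mul_le_mul_left ?_ _
        exact_mod_cast hq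
  have key3 : ENNReal.ofReal (∏ j, d j) * ENNReal.ofReal (r ^ N) ≤ (2^n : ℝ≥0∞) * ENNReal.ofReal (ε ^ N) := by
    have h := key2
    rw [key1, ← mul_assoc, ← mul_assoc] at h
    exact (ENNReal.mul_le_mul_iff_left hB0 hBt).1 h
  have key4 : (∏ j, d j) * r ^ N ≤ 2^n * ε ^ N := by
    have h2 : ((2:ℝ≥0∞)^n) * ENNReal.ofReal (ε ^ N) = ENNReal.ofReal (2^n * ε^N) := by
      rw [ENNReal.ofReal_mul (by positivity : (0:ℝ) ≤ 2^n)]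
      congr 1
      rw [ENNReal.ofReal_pow (by norm_num : (0:ℝ) ≤ 2)]
      norm_num
    have h1 : ENNReal.ofReal ((∏ j, d j) * r ^ N) ≤ ENNReal.ofReal (2^n * ε^N) := by
      rw [ENNReal.ofReal_mul (Finset.prod_nonneg fun j _ => (hdpos j).le), ← h2]
      exact key3
    exact (ENNReal.ofReal_le_ofReal_iff (by positivity)).1 h1
  have hrsN : r ^ N * Real.sqrt N ^ N = 1 := by
    rw [← mul_pow, hr, inv_mul_cancel₀ hsN.ne']
    simp
  calc ∏ j : Fin N, ‖gramSchmidt ℝ g (j:ℕ)‖ = (∏ j, d j) * (r ^ N * Real.sqrt N ^ N) := by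
        rw [hrsN, mul_one]
    _ = ((∏ j, d j) * r ^ N) * Real.sqrt N ^ N := by ring
    _ ≤ (2^n * ε ^ N) * Real.sqrt N ^ N := mul_le_mul_of_nonneg_right key4 (by positivity)
    _ = 2^n * Real.sqrt N ^ N * ε ^ N := by ring

theorem S8.interp_zero (Φ : Ω → H) (X : Finset Ω) : interp Φ X (0:H) = 0 := by
  haveI := S8.fd Φ X
  unfold interp
  simp

theorem S8.mem_Xset {x : ℕ → Ω} {k i : ℕ} (h1 : 1 ≤ k) (h2 : k ≤ i) : x k ∈ Xset x i := by
  classical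
  unfold Xset
  exact Finset.mem_image.2 ⟨k, Finset.mem_Icc.2 ⟨h1, h2⟩, rfl⟩

theorem S8.span_Xset_mono (Φ : Ω → H) (x : ℕ → Ω) {i j : ℕ} (hij : i ≤ j) :
    Submodule.span ℝ (Φ '' ((Xset x i) : Set Ω)) ≤ Submodule.span ℝ (Φ '' ((Xset x j) : Set Ω)) := by
  apply Submodule.span_mono
  apply Set.image_mono
  intro z hz
  classical
  unfold Xset at hz ⊢
  obtain ⟨k, hk, rfl⟩ := Finset.mem_image.1 (Finset.mem_coe.1 hz)
  have hk' := Finset.mem_Icc.1 hk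
  exact Finset.mem_coe.2 (Finset.mem_image.2 ⟨k, Finset.mem_Icc.2 ⟨hk'.1, hk'.2.trans hij⟩, rfl⟩)

theorem S8.energy (Φ : Ω → H) (f : H) (x : ℕ → Ω) (k : ℕ)
    (hp : 0 < powerFun Φ (Xset x k) (x (k+1))) :
    ‖f - interp Φ (Xset x (k+1)) f‖^2
      ≤ ‖f - interp Φ (Xset x k) f‖^2
        - ⟪f - interp Φ (Xset x k) f, Φ (x (k+1))⟫^2 / powerFun Φ (Xset x k) (x (k+1))^2 := by
  set p := powerFun Φ (Xset x k) (x (k+1)) with hpdef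
  set w := Φ (x (k+1)) - interp Φ (Xset x k) (Φ (x (k+1))) with hwdef
  have hwnorm : ‖w‖ = p := rfl
  set r := f - interp Φ (Xset x k) f with hrdef
  set c : ℝ := ⟪r, w⟫ / p^2 with hcdef
  have hwmem : w ∈ Submodule.span ℝ (Φ '' ((Xset x (k+1)) : Set Ω)) := by
    refine Submodule.sub_mem _ ?_ ?_
    · exact Submodule.subset_span ⟨x (k+1),
        Finset.mem_coe.2 (S8.mem_Xset (by omega) (by omega)), rfl⟩
    · exact S8.span_Xset_mono Φ x (Nat.le_succ k) (S8.interp_mem Φ _ _)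
  have hvmem : interp Φ (Xset x k) f + c • w
      ∈ Submodule.span ℝ (Φ '' ((Xset x (k+1)) : Set Ω)) := by
    refine Submodule.add_mem _ ?_ (Submodule.smul_mem _ _ hwmem)
    exact S8.span_Xset_mono Φ x (Nat.le_succ k) (S8.interp_mem Φ _ f)
  have hle : ‖f - interp Φ (Xset x (k+1)) f‖ ≤ ‖f - (interp Φ (Xset x k) f + c • w)‖ :=
    S8.norm_sub_interp_le Φ _ f _ hvmem
  have heq : f - (interp Φ (Xset x k) f + c • w) = r - c • w := by rw [hrdef]; abel
  have hrw : ⟪r, w⟫ = ⟪r, Φ (x (k+1))⟫ := by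
    rw [hwdef, inner_sub_right, S8.inner_sub_interp Φ (Xset x k) f (S8.interp_mem Φ _ _)]
    ring
  have hexp : ‖r - c • w‖^2 = ‖r‖^2 - ⟪r, Φ (x (k+1))⟫^2 / p^2 := by
    rw [norm_sub_sq_real, real_inner_smul_right, norm_smul, Real.norm_eq_abs, mul_pow, sq_abs,
      hwnorm, hcdef, hrw]
    field_simp
    ring
  calc ‖f - interp Φ (Xset x (k+1)) f‖^2
      ≤ ‖f - (interp Φ (Xset x k) f + c • w)‖^2 := pow_le_pow_left₀ (norm_nonneg _) hle 2
  _ = ‖r - c • w‖^2 := by rw [heq]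
  _ = ‖r‖^2 - ⟪r, Φ (x (k+1))⟫^2 / p^2 := hexp

theorem statement_8 [Nonempty Ω]
    (Φ : Ω → H) (hΦ : ∀ z : Ω, ‖Φ z‖ ≤ 1)
    (C ρ : ℝ) (hC : 0 < C) (hρ : 0 < ρ)
    (hcov : ∀ n : ℕ, 1 ≤ n →
      HasCover (acx (Set.range Φ)) n (C * (n : ℝ) ^ (-ρ - 1 / 2)))
    (β γ : ℝ) (hβ : 0 ≤ β) (hγ0 : 0 < γ) (hγ1 : γ ≤ 1)
    (f : H) (x : ℕ → Ω) (hx : IsWeakGreedy Φ f β γ x) :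
    ∀ m : ℕ, ∀ hm : 2 ≤ m,
      (Finset.Icc 1 m).inf' (Finset.nonempty_Icc.mpr (by omega))
          (fun i => supNorm Φ (f - interp Φ (Xset x i) f))
        ≤ (C * Real.sqrt 5 * (4 : ℝ) ^ (ρ + β / 2)) ^ (1 / max 1 β) * γ⁻¹
            * ((m : ℝ) ^ (-ρ - β / 2)) ^ (1 / max 1 β) * ‖f‖ := by
  intro m hm
  classical
  have hm1 : 1 ≤ m := by omega
  have hmR : (0:ℝ) < (m:ℝ) := by exact_mod_cast (by omega : 0 < m)
  -- trivial case f = 0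
  by_cases hf0 : f = 0
  · have hz : supNorm Φ (f - interp Φ (Xset x 1) f) = 0 := by
      rw [hf0, S8.interp_zero, sub_zero]
      simp [supNorm]
    refine le_trans (Finset.inf'_le _ (Finset.mem_Icc.2 ⟨le_refl 1, hm1⟩)) ?_
    rw [hz, hf0, norm_zero, mul_zero]
  have hfpos : 0 < ‖f‖ := norm_pos_iff.2 hf0
  set ε : ℝ := C * (m:ℝ) ^ (-ρ - 1/2 : ℝ) with hεdef
  have hε0 : 0 < ε := mul_pos hC (Real.rpow_pos_of_pos hmR _)
  obtain ⟨q, y, hq, hsub⟩ := hcov m hm1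
  set g : ℕ → H := fun j => Φ (x (j + 2)) with hgdef
  set M : ℝ := (m:ℝ) ^ (-ρ - β/2) with hMdef
  have hM0 : 0 < M := Real.rpow_pos_of_pos hmR _
  set T : ℝ := 2 * C * M * ‖f‖ ^ β with hTdef
  have hT0 : 0 ≤ T := by positivity
  set Q : ℕ → ℝ := fun k =>
    |⟪f - interp Φ (Xset x k) f, Φ (x (k+1))⟫| ^ β
      * powerFun Φ (Xset x k) (x (k+1)) ^ (1-β) with hQdef
  have hQ0 : ∀ k, 0 ≤ Q k := fun k =>
    mul_nonneg (Real.rpow_nonneg (abs_nonneg _) _) (Real.rpow_nonneg (S8.powerFun_nonneg Φ _ _) _)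
  -- STEP 1 : some k in the window has Q k ≤ T
  have hkey : ∃ k ∈ Finset.Icc 1 m, Q k ≤ T := by
    by_cases hex : ∃ k ∈ Finset.Icc 1 m, powerFun Φ (Xset x k) (x (k+1)) = 0
    · obtain ⟨k, hk, hpk⟩ := hex
      refine ⟨k, hk, ?_⟩
      have ht0 : |⟪f - interp Φ (Xset x k) f, Φ (x (k+1))⟫| = 0 := by
        have h := S8.abs_inner_le Φ (Xset x k) f (x (k+1))
        rw [hpk, mul_zero] at h
        exact le_antisymm h (abs_nonneg _)
      simp only [hQdef]
      rcases eq_or_lt_of_le hβ with hb0 | hb0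
      · rw [← hb0, Real.rpow_zero, one_mul, sub_zero, Real.rpow_one, hpk]
        exact hT0
      · rw [ht0, Real.zero_rpow hb0.ne', zero_mul]
        exact hT0
    push_neg at hex
    have hppos : ∀ k ∈ Finset.Icc 1 m, 0 < powerFun Φ (Xset x k) (x (k+1)) :=
      fun k hk => lt_of_le_of_ne (S8.powerFun_nonneg Φ _ _) (Ne.symm (hex k hk))
    set a : ℕ → ℝ := fun k =>
      |⟪f - interp Φ (Xset x k) f, Φ (x (k+1))⟫| / powerFun Φ (Xset x k) (x (k+1)) with hadef
    have ha0 : ∀ k, 0 ≤ a k := fun k => div_nonneg (abs_nonneg _) (S8.powerFun_nonneg Φ _ _)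
    have hstep : ∀ i ∈ Finset.range m, a (i+1)^2
        ≤ ‖f - interp Φ (Xset x (i+1)) f‖^2 - ‖f - interp Φ (Xset x (i+2)) f‖^2 := by
      intro i hi
      have him : i < m := Finset.mem_range.1 hi
      have hmem : (i+1) ∈ Finset.Icc 1 m := Finset.mem_Icc.2 ⟨by omega, by omega⟩
      have hp := hppos (i+1) hmem
      have hE := S8.energy Φ f x (i+1) hp
      have ha2 : a (i+1)^2 = ⟪f - interp Φ (Xset x (i+1)) f, Φ (x (i+2))⟫^2
          / (powerFun Φ (Xset x (i+1)) (x (i+2)))^2 := by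
        simp only [hadef]
        rw [div_pow, sq_abs]
      rw [ha2]
      linarith [hE]
    have hsum : ∑ i ∈ Finset.range m, a (i+1)^2 ≤ ‖f‖^2 := by
      have h1 : ∑ i ∈ Finset.range m, a (i+1)^2
          ≤ ∑ i ∈ Finset.range m,
            (‖f - interp Φ (Xset x (i+1)) f‖^2 - ‖f - interp Φ (Xset x (i+2)) f‖^2) :=
        Finset.sum_le_sum hstep
      have h2 : ∑ i ∈ Finset.range m,
            (‖f - interp Φ (Xset x (i+1)) f‖^2 - ‖f - interp Φ (Xset x (i+2)) f‖^2)
          = ‖f - interp Φ (Xset x 1) f‖^2 - ‖f - interp Φ (Xset x (m+1)) f‖^2 :=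
        Finset.sum_range_sub' (fun i => ‖f - interp Φ (Xset x (i+1)) f‖^2) m
      have h3 : ‖f - interp Φ (Xset x 1) f‖ ≤ ‖f‖ := S8.norm_sub_interp_le_self Φ _ f
      nlinarith [sq_nonneg ‖f - interp Φ (Xset x (m+1)) f‖,
        norm_nonneg (f - interp Φ (Xset x 1) f)]
    have hX0 : 0 ≤ ∏ i ∈ Finset.range m, a (i+1)^2 := Finset.prod_nonneg fun i _ => sq_nonneg _
    have hprod_a2 : ∏ i ∈ Finset.range m, a (i+1)^2 ≤ (‖f‖^2/m)^m := by
      have hw : ∑ _i ∈ Finset.range m, (m:ℝ)⁻¹ = 1 := by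
        rw [Finset.sum_const, Finset.card_range, nsmul_eq_mul, mul_inv_cancel₀ hmR.ne']
      have hgm := Real.geom_mean_le_arith_mean_weighted (Finset.range m)
        (fun _ => (m:ℝ)⁻¹) (fun i => a (i+1)^2)
        (fun i _ => by positivity) hw (fun i _ => sq_nonneg _)
      rw [Real.finset_prod_rpow _ _ (fun i _ => sq_nonneg _) _] at hgm
      have hR : ∑ i ∈ Finset.range m, (m:ℝ)⁻¹ * a (i+1)^2 ≤ ‖f‖^2/m := by
        rw [← Finset.mul_sum, div_eq_inv_mul]
        exact mul_le_mul_of_nonneg_left hsum (by positivity)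
      have hle : (∏ i ∈ Finset.range m, a (i+1)^2) ^ ((m:ℝ)⁻¹) ≤ ‖f‖^2/m := hgm.trans hR
      have hfin := pow_le_pow_left₀ (Real.rpow_nonneg hX0 _) hle m
      rwa [← Real.rpow_natCast ((∏ i ∈ Finset.range m, a (i+1)^2) ^ ((m:ℝ)⁻¹)) m,
        ← Real.rpow_mul hX0, inv_mul_cancel₀ hmR.ne', Real.rpow_one] at hfin
    have hmemacx : ∀ c : Fin m → ℝ, (∑ j, |c j|) ≤ 1 →
        (∑ j : Fin m, c j • g (j:ℕ)) ∈ acx (Set.range Φ) := by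
      intro c hc
      refine subset_closure ?_
      exact ⟨m, c, fun j => g (j:ℕ), fun j => ⟨x ((j:ℕ)+2), rfl⟩, hc, rfl⟩
    have hvol := S8.vol_lemma (H := H) hm1 hq hε0.le (acx (Set.range Φ)) g hmemacx y hsub
    have hple : ∀ j : Fin m,
        powerFun Φ (Xset x ((j:ℕ)+1)) (x ((j:ℕ)+2)) ≤ ‖gramSchmidt ℝ g (j:ℕ)‖ := by
      intro j
      have hgj : g (j:ℕ) = Φ (x ((j:ℕ)+2)) := by rw [hgdef]
      have hw : g (j:ℕ) - gramSchmidt ℝ g (j:ℕ) ∈ Submodule.span ℝ (g '' Set.Iio (j:ℕ)) :=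
        S8.gj_sub_gs_mem' g (j:ℕ)
      have himg : g '' Set.Iio (j:ℕ) ⊆ Φ '' ((Xset x ((j:ℕ)+1)) : Set Ω) := by
        rintro _ ⟨k, hk, rfl⟩
        have hkj : k < (j:ℕ) := hk
        refine ⟨x (k+2), ?_, by rw [hgdef]⟩
        exact Finset.mem_coe.2 (S8.mem_Xset (by omega) (by omega))
      have hw2 : g (j:ℕ) - gramSchmidt ℝ g (j:ℕ)
          ∈ Submodule.span ℝ (Φ '' ((Xset x ((j:ℕ)+1)) : Set Ω)) :=
        Submodule.span_mono himg hw
      have hle := S8.norm_sub_interp_le Φ (Xset x ((j:ℕ)+1)) (Φ (x ((j:ℕ)+2)))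
        (g (j:ℕ) - gramSchmidt ℝ g (j:ℕ)) hw2
      calc powerFun Φ (Xset x ((j:ℕ)+1)) (x ((j:ℕ)+2))
          ≤ ‖Φ (x ((j:ℕ)+2)) - (g (j:ℕ) - gramSchmidt ℝ g (j:ℕ))‖ := hle
      _ = ‖gramSchmidt ℝ g (j:ℕ)‖ := by rw [← hgj]; congr 1; abel
    have hprod_p : ∏ i ∈ Finset.range m, powerFun Φ (Xset x (i+1)) (x (i+2))
        ≤ (2 * Real.sqrt m * ε)^m := by
      have h1 : ∏ i ∈ Finset.range m, powerFun Φ (Xset x (i+1)) (x (i+2))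
          = ∏ j : Fin m, powerFun Φ (Xset x ((j:ℕ)+1)) (x ((j:ℕ)+2)) :=
        (Fin.prod_univ_eq_prod_range (fun i => powerFun Φ (Xset x (i+1)) (x (i+2))) m).symm
      rw [h1]
      calc ∏ j : Fin m, powerFun Φ (Xset x ((j:ℕ)+1)) (x ((j:ℕ)+2))
          ≤ ∏ j : Fin m, ‖gramSchmidt ℝ g (j:ℕ)‖ :=
            Finset.prod_le_prod (fun j _ => S8.powerFun_nonneg Φ _ _) (fun j _ => hple j)
      _ ≤ 2^m * Real.sqrt m ^ m * ε^m := hvol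
      _ = (2 * Real.sqrt m * ε)^m := by
            rw [show (2 * Real.sqrt m * ε)^m = 2^m * Real.sqrt m ^ m * ε^m by
              rw [mul_pow, mul_pow]]

    have hQeq : ∀ k ∈ Finset.Icc 1 m, Q k = a k ^ β * powerFun Φ (Xset x k) (x (k+1)) := by
      intro k hk
      have hp := hppos k hk
      have hpβ : (0:ℝ) < powerFun Φ (Xset x k) (x (k+1)) ^ β := Real.rpow_pos_of_pos hp β
      simp only [hQdef, hadef]
      rw [Real.div_rpow (abs_nonneg _) hp.le, div_mul_eq_mul_div, eq_comm, div_eq_iff hpβ.ne']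
      rw [mul_assoc, ← Real.rpow_add hp]
      norm_num
    have hbase : (‖f‖ / Real.sqrt m) ^ β * (2 * Real.sqrt m * ε) = T := by
      have hsm : Real.sqrt (m:ℝ) = (m:ℝ) ^ ((1:ℝ)/2) := Real.sqrt_eq_rpow _
      have h1 : (‖f‖ / Real.sqrt m) ^ β = ‖f‖ ^ β / ((m:ℝ) ^ ((1:ℝ)/2 * β)) := by
        rw [Real.div_rpow (norm_nonneg f) (Real.sqrt_nonneg _), hsm, ← Real.rpow_mul hmR.le]
      rw [h1, hsm, hεdef, hTdef, hMdef]
      rw [div_mul_eq_mul_div, div_eq_iff (by positivity : ((m:ℝ) ^ ((1:ℝ)/2*β)) ≠ 0)]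
      rw [show (2:ℝ) * (m:ℝ)^((1:ℝ)/2) * (C * (m:ℝ)^(-ρ-1/2:ℝ))
            = 2*C*((m:ℝ)^((1:ℝ)/2) * (m:ℝ)^(-ρ-1/2:ℝ)) by ring,
        ← Real.rpow_add hmR,
        show 2*C*(m:ℝ)^(-ρ-β/2) * ‖f‖^β * (m:ℝ)^((1:ℝ)/2*β)
            = 2*C*((m:ℝ)^(-ρ-β/2) * (m:ℝ)^((1:ℝ)/2*β)) * ‖f‖^β by ring,
        ← Real.rpow_add hmR,
        show (1:ℝ)/2 + (-ρ-1/2) = -ρ by ring,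
        show -ρ-β/2 + (1:ℝ)/2*β = -ρ by ring]
      ring
    have hprodQ : ∏ i ∈ Finset.range m, Q (i+1) ≤ T^m := by
      have he : ∀ i ∈ Finset.range m,
          Q (i+1) = a (i+1) ^ β * powerFun Φ (Xset x (i+1)) (x (i+2)) := by
        intro i hi
        have him : i < m := Finset.mem_range.1 hi
        exact hQeq (i+1) (Finset.mem_Icc.2 ⟨by omega, by omega⟩)
      rw [Finset.prod_congr rfl he, Finset.prod_mul_distrib,
        Real.finset_prod_rpow _ _ (fun i _ => ha0 (i+1)) β]
      have hA : ∏ i ∈ Finset.range m, a (i+1) ≤ (‖f‖ / Real.sqrt m)^m := by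
        have hsq : (∏ i ∈ Finset.range m, a (i+1))^2 = ∏ i ∈ Finset.range m, a (i+1)^2 := by
          rw [Finset.prod_pow]
        have hY0 : (0:ℝ) ≤ (‖f‖ / Real.sqrt m)^m := by positivity
        refine le_of_pow_le_pow_left₀ two_ne_zero hY0 ?_
        rw [hsq]
        calc ∏ i ∈ Finset.range m, a (i+1)^2 ≤ (‖f‖^2/m)^m := hprod_a2
        _ = ((‖f‖ / Real.sqrt m)^2)^m := by
            congr 1
            rw [div_pow, Real.sq_sqrt hmR.le]
        _ = ((‖f‖ / Real.sqrt m)^m)^2 := by rw [← pow_mul, ← pow_mul, Nat.mul_comm]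
      have hAβ : (∏ i ∈ Finset.range m, a (i+1)) ^ β ≤ ((‖f‖ / Real.sqrt m) ^ β) ^ m := by
        have h1 : (∏ i ∈ Finset.range m, a (i+1)) ^ β ≤ ((‖f‖ / Real.sqrt m)^m) ^ β :=
          Real.rpow_le_rpow (Finset.prod_nonneg fun i _ => ha0 _) hA hβ
        refine h1.trans_eq ?_
        rw [← Real.rpow_natCast (‖f‖ / Real.sqrt m) m, ← Real.rpow_mul (by positivity),
          mul_comm (m:ℝ) β, Real.rpow_mul (by positivity), Real.rpow_natCast]
      calc (∏ i ∈ Finset.range m, a (i+1)) ^ β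
            * ∏ i ∈ Finset.range m, powerFun Φ (Xset x (i+1)) (x (i+2))
          ≤ ((‖f‖ / Real.sqrt m) ^ β) ^ m * (2 * Real.sqrt m * ε)^m := by
            refine mul_le_mul hAβ hprod_p
              (Finset.prod_nonneg fun i _ => S8.powerFun_nonneg Φ _ _) (by positivity)
      _ = ((‖f‖ / Real.sqrt m) ^ β * (2 * Real.sqrt m * ε))^m := by rw [← mul_pow]
      _ = T^m := by rw [hbase]
    obtain ⟨i₀, hi₀, hmin⟩ := Finset.exists_min_image (Finset.range m) (fun i => Q (i+1))
      ⟨0, Finset.mem_range.2 (by omega)⟩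
    have hi₀m : i₀ < m := Finset.mem_range.1 hi₀
    refine ⟨i₀+1, Finset.mem_Icc.2 ⟨by omega, by omega⟩, ?_⟩
    have hQpow : Q (i₀+1) ^ m ≤ T ^ m := by
      calc Q (i₀+1)^m = ∏ _i ∈ Finset.range m, Q (i₀+1) := by
            rw [Finset.prod_const, Finset.card_range]
      _ ≤ ∏ i ∈ Finset.range m, Q (i+1) :=
          Finset.prod_le_prod (fun i _ => hQ0 _) (fun i hi => hmin i hi)
      _ ≤ T^m := hprodQ
    exact le_of_pow_le_pow_left₀ (by omega) hT0 hQpow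
  obtain ⟨k₀, hk₀, hQT⟩ := hkey
  -- STEP 2 : conclude
  have h45 : (2:ℝ) ≤ Real.sqrt 5 * 4 ^ (ρ + β/2) := by
    have h1 : (2:ℝ) ≤ Real.sqrt 5 := by
      have h4 : Real.sqrt 4 = 2 := by
        rw [show (4:ℝ) = 2^2 by norm_num, Real.sqrt_sq (by norm_num)]
      rw [← h4]
      exact Real.sqrt_le_sqrt (by norm_num)
    have h2 : (1:ℝ) ≤ 4 ^ (ρ + β/2) := Real.one_le_rpow (by norm_num) (by linarith)
    calc (2:ℝ) = 2 * 1 := by ring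
    _ ≤ Real.sqrt 5 * 4 ^ (ρ + β/2) := mul_le_mul h1 h2 (by norm_num) (Real.sqrt_nonneg 5)
  refine le_trans (Finset.inf'_le _ hk₀) ?_
  rcases le_or_gt β 1 with hβ1 | hβ1
  · -- β ≤ 1 : max 1 β = 1
    have hmax : max 1 β = 1 := max_eq_left hβ1
    have hzb : ∀ z : Ω, |⟪f - interp Φ (Xset x k₀) f, Φ z⟫| ≤ γ⁻¹ * T * ‖f‖ ^ (1-β) := by
      intro z
      exact S8.real_le_one hβ hβ1 hγ0 (abs_nonneg _) (S8.powerFun_nonneg Φ _ _)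
        (norm_nonneg _) (S8.norm_sub_interp_le_self Φ _ f)
        (S8.abs_inner_le Φ _ f z) ((hx k₀ z).trans hQT)
    have hsup : supNorm Φ (f - interp Φ (Xset x k₀) f) ≤ γ⁻¹ * T * ‖f‖ ^ (1-β) :=
      ciSup_le hzb
    refine hsup.trans ?_
    rw [hmax]
    rw [show (1:ℝ)/1 = 1 by norm_num, Real.rpow_one, Real.rpow_one]
    have hf : ‖f‖ ^ β * ‖f‖ ^ (1-β) = ‖f‖ := by
      rw [← Real.rpow_add hfpos]; norm_num
    have hX0 : 0 ≤ C * γ⁻¹ * M := by positivity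
    calc γ⁻¹ * T * ‖f‖ ^ (1-β)
        = 2 * (C * γ⁻¹ * M) * (‖f‖ ^ β * ‖f‖ ^ (1-β)) := by rw [hTdef]; ring
    _ = 2 * (C * γ⁻¹ * M) * ‖f‖ := by rw [hf]
    _ ≤ (Real.sqrt 5 * 4 ^ (ρ + β/2)) * (C * γ⁻¹ * M) * ‖f‖ := by
        refine mul_le_mul_of_nonneg_right ?_ (norm_nonneg f)
        exact mul_le_mul_of_nonneg_right h45 hX0
    _ = C * Real.sqrt 5 * 4 ^ (ρ + β/2) * γ⁻¹ * M * ‖f‖ := by ring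
  · -- β > 1 : max 1 β = β
    have hmax : max 1 β = β := max_eq_right hβ1.le
    have hβ0' : (0:ℝ) < β := by linarith
    have hzb : ∀ z : Ω, |⟪f - interp Φ (Xset x k₀) f, Φ z⟫| ≤ γ⁻¹ * T ^ (1/β) := by
      intro z
      exact S8.real_gt_one hβ1 hγ0 hγ1 (abs_nonneg _) (S8.powerFun_nonneg Φ _ _)
        (S8.powerFun_le_one Φ hΦ _ _) (norm_nonneg _)
        (S8.abs_inner_le Φ _ f z) ((hx k₀ z).trans hQT)
    have hsup : supNorm Φ (f - interp Φ (Xset x k₀) f) ≤ γ⁻¹ * T ^ (1/β) :=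
      ciSup_le hzb
    refine hsup.trans ?_
    rw [hmax]
    set A : ℝ := C * Real.sqrt 5 * 4 ^ (ρ + β/2) with hAdef
    have hA0 : 0 ≤ A := by positivity
    have hTT' : T ≤ A * M * ‖f‖ ^ β := by
      have : T = 2 * (C * M * ‖f‖ ^ β) := by rw [hTdef]; ring
      rw [this]
      calc 2 * (C * M * ‖f‖ ^ β) ≤ (Real.sqrt 5 * 4 ^ (ρ + β/2)) * (C * M * ‖f‖ ^ β) :=
        mul_le_mul_of_nonneg_right h45 (by positivity)
      _ = A * M * ‖f‖ ^ β := by rw [hAdef]; ring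
    have h1 : T ^ (1/β) ≤ (A * M * ‖f‖ ^ β) ^ (1/β) :=
      Real.rpow_le_rpow hT0 hTT' (by positivity)
    have h2 : (A * M * ‖f‖ ^ β) ^ (1/β) = A ^ (1/β) * M ^ (1/β) * ‖f‖ := by
      rw [Real.mul_rpow (by positivity) (Real.rpow_nonneg (norm_nonneg f) _),
        Real.mul_rpow hA0 hM0.le]
      congr 1
      rw [← Real.rpow_mul (norm_nonneg f), mul_one_div, div_self hβ0'.ne', Real.rpow_one]
    calc γ⁻¹ * T ^ (1/β) ≤ γ⁻¹ * (A ^ (1/β) * M ^ (1/β) * ‖f‖) := by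
          refine mul_le_mul_of_nonneg_left (h1.trans_eq h2) (by positivity)
    _ = A ^ (1/β) * γ⁻¹ * M ^ (1/β) * ‖f‖ := by ring
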